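/- Define L^q_{ij} := (Ĥ⁻¹)^{ql} ∂_j Ĥ_{li}, the torsion T^p_{ij} := ½(L^p_{ij} − L^p_{ji}), and on ω the fields H_{αβ} := A_α·a_β, H_{3α} := N·a_α, F_{αβ} := A_α·D_β, F_{3β} := N·D_β, F_{α3} := A_α·d, F_{33} := N·d. Then T^p_{ij}(θ,0) = 0 for all indices p,i,j and all θ ∈ ω if and only if the following hold at every point of ω: (1) ∂_β H_{iα} − ∂_α H_{iβ} = 0 for i ∈ {1,2,3} and α,β ∈ {1,2}; (2) ∂_α F_{μ3} − F_{μα} + B^ν_μ H_{να} = 0 for μ,α ∈ {1,2}; (3) ∂_α F_{33} − F_{3α} = 0 for α ∈ {1,2}. -/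

import Mathlib

open Set
open scoped BigOperators

noncomputable section

/-- Euclidean dot product on ℝ³. -/
def dot3 (u v : Fin 3 → ℝ) : ℝ := ∑ m, u m * v m

/-- Cross product on ℝ³. -/
def cross3 (u v : Fin 3 → ℝ) : Fin 3 → ℝ :=
  ![u 1 * v 2 - u 2 * v 1, u 2 * v 0 - u 0 * v 2, u 0 * v 1 - u 1 * v 0]

/-- Euclidean norm on ℝ³. -/
def norm3 (u : Fin 3 → ℝ) : ℝ := Real.sqrt (dot3 u u)

/-- Partial derivative of a scalar field on ℝ³. -/
def pd3 (k : Fin 3) (f : (Fin 3 → ℝ) → ℝ) (x : Fin 3 → ℝ) : ℝ :=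
  fderiv ℝ f x (Pi.single k 1)

/-- Partial derivative of a vector field on ℝ³. -/
def vpd3 (k : Fin 3) (f : (Fin 3 → ℝ) → (Fin 3 → ℝ)) (x : Fin 3 → ℝ) : Fin 3 → ℝ :=
  fderiv ℝ f x (Pi.single k 1)

/-- Partial derivative of a scalar field on ℝ². -/
def pd2 (α : Fin 2) (f : (Fin 2 → ℝ) → ℝ) (θ : Fin 2 → ℝ) : ℝ :=
  fderiv ℝ f θ (Pi.single α 1)

/-- Partial derivative of a vector field on ℝ². -/
def vpd2 (α : Fin 2) (f : (Fin 2 → ℝ) → (Fin 3 → ℝ)) (θ : Fin 2 → ℝ) : Fin 3 → ℝ :=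
  fderiv ℝ f θ (Pi.single α 1)

/-- The surface coordinates of a point of Ω ⊆ ℝ³. -/
def θof (x : Fin 3 → ℝ) : Fin 2 → ℝ := ![x 0, x 1]

/-- Embedding of (θ, ζ) as a point of ℝ³. -/
def emb (θ : Fin 2 → ℝ) (ζ : ℝ) : Fin 3 → ℝ := ![θ 0, θ 1, ζ]

section Helpers

open Matrix

lemma dot3_comm (u v : Fin 3 → ℝ) : dot3 u v = dot3 v u := by
  simp [dot3, Fin.sum_univ_three]; ring

lemma dot3_smul_left (c : ℝ) (u v : Fin 3 → ℝ) : dot3 (c • u) v = c * dot3 u v := by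
  simp [dot3, Fin.sum_univ_three]; ring

lemma dot3_smul_right (c : ℝ) (u v : Fin 3 → ℝ) : dot3 u (c • v) = c * dot3 u v := by
  simp [dot3, Fin.sum_univ_three]; ring

lemma dot3_add_left (u w v : Fin 3 → ℝ) : dot3 (u + w) v = dot3 u v + dot3 w v := by
  simp [dot3, Fin.sum_univ_three]; ring

lemma dot3_add_right (u w v : Fin 3 → ℝ) : dot3 u (w + v) = dot3 u w + dot3 u v := by
  simp [dot3, Fin.sum_univ_three]; ring

lemma dot3_sub_left (u w v : Fin 3 → ℝ) : dot3 (u - w) v = dot3 u v - dot3 w v := by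
  simp [dot3, Fin.sum_univ_three]; ring

lemma dot3_sub_right (u w v : Fin 3 → ℝ) : dot3 u (w - v) = dot3 u w - dot3 u v := by
  simp [dot3, Fin.sum_univ_three]; ring

lemma dot3_sum_left {ι : Type*} (s : Finset ι) (f : ι → Fin 3 → ℝ) (v : Fin 3 → ℝ) :
    dot3 (∑ i ∈ s, f i) v = ∑ i ∈ s, dot3 (f i) v := by
  simp only [dot3, Finset.sum_apply, Finset.sum_mul]
  rw [Finset.sum_comm]

lemma dot3_sum_right {ι : Type*} (s : Finset ι) (f : ι → Fin 3 → ℝ) (v : Fin 3 → ℝ) :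
    dot3 v (∑ i ∈ s, f i) = ∑ i ∈ s, dot3 v (f i) := by
  rw [dot3_comm, dot3_sum_left]
  exact Finset.sum_congr rfl fun i _ => dot3_comm _ _

lemma dot3_self_nonneg (u : Fin 3 → ℝ) : 0 ≤ dot3 u u := by
  apply Finset.sum_nonneg; intro m _; exact mul_self_nonneg _

lemma eq_zero_of_dot3_self (u : Fin 3 → ℝ) (h : dot3 u u = 0) : u = 0 := by
  have h0 : ∀ m : Fin 3, u m * u m = 0 := fun m =>
    (Finset.sum_eq_zero_iff_of_nonneg (fun m _ => mul_self_nonneg (u m))).mp h m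
      (Finset.mem_univ m)
  funext m; exact mul_self_eq_zero.mp (h0 m)

lemma dot3_cross_left (u v : Fin 3 → ℝ) : dot3 (cross3 u v) u = 0 := by
  simp [dot3, cross3, Fin.sum_univ_three]; ring

lemma dot3_cross_right (u v : Fin 3 → ℝ) : dot3 (cross3 u v) v = 0 := by
  simp [dot3, cross3, Fin.sum_univ_three]; ring

lemma lagrange (u v : Fin 3 → ℝ) :
    dot3 u u * dot3 v v - dot3 u v * dot3 u v = dot3 (cross3 u v) (cross3 u v) := by
  simp [dot3, cross3, Fin.sum_univ_three]; ring

lemma det_rows (u v : Fin 3 → ℝ) :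
    (Matrix.of ![u, v, cross3 u v]).det = dot3 (cross3 u v) (cross3 u v) := by
  rw [Matrix.det_fin_three]
  simp [dot3, cross3, Fin.sum_univ_three]
  ring

lemma vec_eq_zero_of_mulVec {M : Matrix (Fin 3) (Fin 3) ℝ} (hd : M.det ≠ 0)
    {u : Fin 3 → ℝ} (h : M.mulVec u = 0) : u = 0 := by
  have h1 : (M⁻¹ * M).mulVec u = 0 := by
    rw [← Matrix.mulVec_mulVec, h, Matrix.mulVec_zero]
  rwa [Matrix.nonsing_inv_mul M (Ne.isUnit hd), Matrix.one_mulVec] at h1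

lemma vec_eq_zero_of_inv_mulVec {M : Matrix (Fin 3) (Fin 3) ℝ} (hd : M.det ≠ 0)
    {u : Fin 3 → ℝ} (h : M⁻¹.mulVec u = 0) : u = 0 := by
  have h1 : (M * M⁻¹).mulVec u = 0 := by
    rw [← Matrix.mulVec_mulVec, h, Matrix.mulVec_zero]
  rwa [Matrix.mul_nonsing_inv M (Ne.isUnit hd), Matrix.one_mulVec] at h1

lemma cross3_ne_zero {u v : Fin 3 → ℝ}
    (h : ∀ a b : ℝ, a • u + b • v = 0 → a = 0 ∧ b = 0) : cross3 u v ≠ 0 := by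
  intro hc
  have hu : u ≠ 0 := by
    intro h0
    have := (h 1 0 (by simp [h0])).1
    norm_num at this
  have huu : dot3 u u ≠ 0 := fun h0 => hu (eq_zero_of_dot3_self u h0)
  set w := dot3 u v • u + (-dot3 u u) • v with hwdef
  have key : dot3 w w
      = dot3 u u * (dot3 u u * dot3 v v - dot3 u v * dot3 u v) := by
    simp only [hwdef, dot3, Fin.sum_univ_three, Pi.add_apply, Pi.smul_apply, smul_eq_mul]
    ring
  rw [lagrange, hc] at key
  have : dot3 w w = 0 := by rw [key]; simp [dot3]
  exact huu (neg_eq_zero.mp (h _ _ (eq_zero_of_dot3_self w this)).2)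

lemma gram_det_ne_zero {v : Fin 3 → Fin 3 → ℝ}
    (h : ∀ c : Fin 3 → ℝ, ∑ k, c k • v k = 0 → c = 0) :
    (Matrix.of fun i j => dot3 (v i) (v j)).det ≠ 0 := by
  set M : Matrix (Fin 3) (Fin 3) ℝ := Matrix.of v with hM
  have hMt : Mᵀ.det ≠ 0 := by
    intro hd
    obtain ⟨c, hc0, hc⟩ := Matrix.exists_mulVec_eq_zero_iff.mpr hd
    apply hc0
    apply h
    ext j
    have := congrFun hc j
    simpa [Matrix.mulVec, dotProduct, Matrix.transpose_apply, hM, dot3,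
      Finset.sum_apply, mul_comm] using this
  have hG : (Matrix.of fun i j => dot3 (v i) (v j)) = M * Mᵀ := by
    ext i j; simp [Matrix.mul_apply, dot3, Matrix.transpose_apply, hM]
  rw [hG, Matrix.det_mul]
  rw [Matrix.det_transpose] at hMt ⊢
  exact mul_ne_zero hMt hMt

lemma hasFDerivAt_comp_apply {E : Type*} [NormedAddCommGroup E] [NormedSpace ℝ E]
    {f : E → Fin 3 → ℝ} {f' : E →L[ℝ] Fin 3 → ℝ} {x : E} (hf : HasFDerivAt f f' x)
    (m : Fin 3) : HasFDerivAt (fun t => f t m)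
      ((ContinuousLinearMap.proj m : (Fin 3 → ℝ) →L[ℝ] ℝ).comp f') x :=
  (ContinuousLinearMap.proj m : (Fin 3 → ℝ) →L[ℝ] ℝ).hasFDerivAt.comp x hf

lemma hasFDerivAt_dot3 {E : Type*} [NormedAddCommGroup E] [NormedSpace ℝ E]
    {f g : E → Fin 3 → ℝ} {f' g' : E →L[ℝ] Fin 3 → ℝ} {x : E}
    (hf : HasFDerivAt f f' x) (hg : HasFDerivAt g g' x) :
    HasFDerivAt (fun t => dot3 (f t) (g t))
      (∑ m, (g x m • ((ContinuousLinearMap.proj m : (Fin 3 → ℝ) →L[ℝ] ℝ).comp f')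
        + f x m • ((ContinuousLinearMap.proj m : (Fin 3 → ℝ) →L[ℝ] ℝ).comp g'))) x := by
  have : ∀ m ∈ (Finset.univ : Finset (Fin 3)), HasFDerivAt (fun t => f t m * g t m)
      (g x m • ((ContinuousLinearMap.proj m : (Fin 3 → ℝ) →L[ℝ] ℝ).comp f')
        + f x m • ((ContinuousLinearMap.proj m : (Fin 3 → ℝ) →L[ℝ] ℝ).comp g')) x := by
    intro m _
    have := (hasFDerivAt_comp_apply hf m).fun_mul (hasFDerivAt_comp_apply hg m)
    rw [add_comm]
    exact this
  exact HasFDerivAt.fun_sum this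

lemma fderiv_dot3_apply {E : Type*} [NormedAddCommGroup E] [NormedSpace ℝ E]
    {f g : E → Fin 3 → ℝ} {x : E} (hf : DifferentiableAt ℝ f x)
    (hg : DifferentiableAt ℝ g x) (v : E) :
    fderiv ℝ (fun t => dot3 (f t) (g t)) x v
      = dot3 (fderiv ℝ f x v) (g x) + dot3 (f x) (fderiv ℝ g x v) := by
  rw [(hasFDerivAt_dot3 hf.hasFDerivAt hg.hasFDerivAt).fderiv]
  simp [dot3, Fin.sum_univ_three]
  ring

lemma differentiableAt_dot3 {E : Type*} [NormedAddCommGroup E] [NormedSpace ℝ E]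
    {f g : E → Fin 3 → ℝ} {x : E} (hf : DifferentiableAt ℝ f x)
    (hg : DifferentiableAt ℝ g x) :
    DifferentiableAt ℝ (fun t => dot3 (f t) (g t)) x :=
  (hasFDerivAt_dot3 hf.hasFDerivAt hg.hasFDerivAt).differentiableAt

lemma differentiableAt_cross3 {E : Type*} [NormedAddCommGroup E] [NormedSpace ℝ E]
    {f g : E → Fin 3 → ℝ} {x : E} (hf : DifferentiableAt ℝ f x)
    (hg : DifferentiableAt ℝ g x) :
    DifferentiableAt ℝ (fun t => cross3 (f t) (g t)) x := by
  have hfm : ∀ m : Fin 3, DifferentiableAt ℝ (fun t => f t m) x := fun m =>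
    (hasFDerivAt_comp_apply hf.hasFDerivAt m).differentiableAt
  have hgm : ∀ m : Fin 3, DifferentiableAt ℝ (fun t => g t m) x := fun m =>
    (hasFDerivAt_comp_apply hg.hasFDerivAt m).differentiableAt
  rw [differentiableAt_pi]
  intro m
  fin_cases m <;>
    simp only [cross3, Matrix.cons_val_zero, Matrix.cons_val_one, Matrix.head_cons,
      Matrix.cons_val_two, Matrix.tail_cons, Fin.isValue] <;>
    exact ((hfm _).mul (hgm _)).sub ((hfm _).mul (hgm _))

def θL : (Fin 3 → ℝ) →L[ℝ] (Fin 2 → ℝ) :=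
  ContinuousLinearMap.pi (fun α : Fin 2 => ContinuousLinearMap.proj (Fin.castSucc α))

def embL : (Fin 2 → ℝ) →L[ℝ] (Fin 3 → ℝ) :=
  ContinuousLinearMap.pi ![ContinuousLinearMap.proj 0, ContinuousLinearMap.proj 1, 0]

lemma θL_apply (x : Fin 3 → ℝ) : θL x = θof x := by
  funext α; fin_cases α <;> simp [θL, θof, Fin.castSucc] <;> rfl

lemma θL_eq : ⇑θL = θof := funext θL_apply

lemma embL_apply (θ : Fin 2 → ℝ) : embL θ = emb θ 0 := by
  funext k; fin_cases k <;> simp [embL, emb]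

lemma θL_single_castSucc (α : Fin 2) : θL (Pi.single (Fin.castSucc α) 1) = Pi.single α 1 := by
  funext β; fin_cases α <;> fin_cases β <;>
    simp [θL, Fin.castSucc, Pi.single_apply] <;> decide

lemma θL_single_two : θL (Pi.single (2 : Fin 3) 1) = 0 := by
  funext β; fin_cases β <;> simp [θL, Fin.castSucc, Pi.single_apply] <;> decide

lemma embL_single (β : Fin 2) : embL (Pi.single β 1) = Pi.single (Fin.castSucc β) 1 := by
  funext k; fin_cases β <;> fin_cases k <;> simp [embL, Pi.single_apply, Fin.castSucc]

lemma θof_emb (θ : Fin 2 → ℝ) (ζ : ℝ) : θof (emb θ ζ) = θ := by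
  funext α; fin_cases α <;> simp [θof, emb]

lemma emb_two (θ : Fin 2 → ℝ) (ζ : ℝ) : emb θ ζ 2 = ζ := rfl

lemma hasDerivAt_emb (θ : Fin 2 → ℝ) (ζ : ℝ) :
    HasDerivAt (fun ζ => emb θ ζ) ((Pi.single 2 1 : Fin 3 → ℝ)) ζ := by
  have : (fun ζ => emb θ ζ) = fun ζ : ℝ => emb θ 0 + ζ • (Pi.single 2 1 : Fin 3 → ℝ) :=
    funext fun ζ => by funext k; fin_cases k <;> simp [emb, Pi.single_apply]
  rw [this]
  simpa using (((hasDerivAt_id ζ).smul_const (Pi.single (2:Fin 3) (1:ℝ))).const_add (emb θ 0))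

lemma pd3_zeta (f : (Fin 3 → ℝ) → ℝ) (θ : Fin 2 → ℝ)
    (hf : DifferentiableAt ℝ f (emb θ 0)) :
    pd3 2 f (emb θ 0) = deriv (fun ζ => f (emb θ ζ)) 0 := by
  have h := hf.hasFDerivAt.comp_hasDerivAt 0 (hasDerivAt_emb θ 0)
  rw [pd3, ← h.deriv]; rfl

lemma pd2_surface (f : (Fin 3 → ℝ) → ℝ) (θ : Fin 2 → ℝ)
    (hf : DifferentiableAt ℝ f (emb θ 0)) (β : Fin 2) :
    pd2 β (fun θ' => f (emb θ' 0)) θ = pd3 (Fin.castSucc β) f (emb θ 0) := by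
  rw [pd2, pd3]
  have h0 : (fun θ' => f (emb θ' 0)) = f ∘ ⇑embL :=
    funext fun θ' => by simp only [Function.comp_apply, embL_apply]
  have h1 : fderiv ℝ (f ∘ ⇑embL) θ = (fderiv ℝ f (embL θ)).comp embL := by
    rw [fderiv_comp θ (by rwa [embL_apply]) embL.differentiableAt, embL.fderiv]
  rw [h0, h1]
  rw [ContinuousLinearMap.comp_apply, embL_single, embL_apply]

lemma deriv_quadratic (q0 q1 q2 : ℝ) :
    deriv (fun ζ : ℝ => q0 + ζ * q1 + ζ ^ 2 * q2) 0 = q1 := by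
  have h : HasDerivAt (fun ζ : ℝ => q0 + ζ * q1 + ζ ^ 2 * q2) (q1 + 2 * 0 ^ 1 * 0 * q2) 0 := by
    have h1 : HasDerivAt (fun ζ : ℝ => ζ * q1) q1 0 := by
      simpa using (hasDerivAt_id (0:ℝ)).mul_const q1
    have h2 : HasDerivAt (fun ζ : ℝ => ζ ^ 2 * q2) (2 * 0 ^ 1 * 0 * q2) 0 := by
      have := (hasDerivAt_pow 2 (0:ℝ)).mul_const q2
      simpa [mul_comm] using this
    simpa using (h1.const_add q0).fun_add h2
  simpa using h.deriv

lemma deriv_linear (q0 q1 : ℝ) : deriv (fun ζ : ℝ => q0 + ζ * q1) 0 = q1 := by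
  have h : HasDerivAt (fun ζ : ℝ => q0 + ζ * q1) q1 0 := by
    simpa using ((hasDerivAt_id (0:ℝ)).mul_const q1).const_add q0
  exact h.deriv

end Helpers

/-- Proposition 3.1: the mid-surface torsion of the material connection vanishes if and
only if the 2-d Cosserat inhomogeneity measures vanish simultaneously. -/
theorem stmt5
    (ω : Set (Fin 2 → ℝ)) (hωo : IsOpen ω) (hωb : Bornology.IsBounded ω)
    (hωsc : SimplyConnectedSpace ω)
    (ht : ℝ) (hht : 0 < ht)
    -- mid-surface parametrization, tangents, normal and curvature
    (R : (Fin 2 → ℝ) → Fin 3 → ℝ)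
    (hRs : ContDiffOn ℝ (⊤ : ℕ∞) R ω) (hRinj : Set.InjOn R ω)
    (hRimm : ∀ θ ∈ ω, Function.Injective (fderiv ℝ R θ))
    (A : Fin 2 → (Fin 2 → ℝ) → Fin 3 → ℝ) (hA : ∀ α θ, A α θ = vpd2 α R θ)
    (N : (Fin 2 → ℝ) → Fin 3 → ℝ)
    (hN : ∀ θ, N θ = (norm3 (cross3 (A 0 θ) (A 1 θ)))⁻¹ • cross3 (A 0 θ) (A 1 θ))
    (Bf : Fin 2 → Fin 2 → (Fin 2 → ℝ) → ℝ)
    (hBf : ∀ α β θ, Bf α β θ = -(dot3 (vpd2 β N θ) (A α θ)))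
    -- B^β_α := A^{βγ} B_{αγ}
    (Bup : Fin 2 → Fin 2 → (Fin 2 → ℝ) → ℝ)
    (hBup : ∀ β α θ, Bup β α θ =
      ∑ γ, (Matrix.of fun μ ν : Fin 2 => dot3 (A μ θ) (A ν θ))⁻¹ β γ * Bf α γ θ)
    -- the 3-d parametrization X(θ,ζ) = R(θ) + ζ N(θ), a diffeomorphism onto its image
    (X : (Fin 3 → ℝ) → Fin 3 → ℝ)
    (hX : ∀ x, X x = R (θof x) + x 2 • N (θof x))
    (hXinj : Set.InjOn X {x | θof x ∈ ω ∧ x 2 ∈ Ioo (-ht) ht})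
    (hXdiff : ∀ x, θof x ∈ ω → x 2 ∈ Ioo (-ht) ht → Function.Bijective (fderiv ℝ X x))
    -- the material uniformity field Ĥ, smooth and invertible on Ω
    (Hh : Fin 3 → Fin 3 → (Fin 3 → ℝ) → ℝ)
    (hHs : ∀ i j, ContDiffOn ℝ (⊤ : ℕ∞) (Hh i j) {x | θof x ∈ ω ∧ x 2 ∈ Ioo (-ht) ht})
    (hHinv : ∀ x, θof x ∈ ω → x 2 ∈ Ioo (-ht) ht →
      (Matrix.of fun i j => Hh i j x).det ≠ 0)
    -- the frame g_j := Ĥ_{ij} G^i, where G^i := G^{ij} G_j and G_i := ∂_i X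
    (gv : Fin 3 → (Fin 3 → ℝ) → Fin 3 → ℝ)
    (hgv : ∀ j x, gv j x = ∑ i, Hh i j x •
      (∑ k, (Matrix.of fun p q => dot3 (vpd3 p X x) (vpd3 q X x))⁻¹ i k • vpd3 k X x))
    -- the Cosserat structure: g_α = a_α + ζ D_α, g_3 = d
    (a D : Fin 2 → (Fin 2 → ℝ) → Fin 3 → ℝ) (d : (Fin 2 → ℝ) → Fin 3 → ℝ)
    (has : ∀ α, ContDiffOn ℝ (⊤ : ℕ∞) (a α) ω)
    (hDs : ∀ α, ContDiffOn ℝ (⊤ : ℕ∞) (D α) ω)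
    (hds : ContDiffOn ℝ (⊤ : ℕ∞) d ω)
    (hstruct : ∀ x, θof x ∈ ω → x 2 ∈ Ioo (-ht) ht →
      (∀ α : Fin 2, gv α.castSucc x = a α (θof x) + x 2 • D α (θof x)) ∧
      gv 2 x = d (θof x))
    -- the material connection L^q_{ij} := (Ĥ⁻¹)^{ql} ∂_j Ĥ_{li} and its torsion
    (L : Fin 3 → Fin 3 → Fin 3 → (Fin 3 → ℝ) → ℝ)
    (hL : ∀ q i j x, L q i j x =
      ∑ l, (Matrix.of fun p r => Hh p r x)⁻¹ q l * pd3 j (Hh l i) x)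
    (T : Fin 3 → Fin 3 → Fin 3 → (Fin 3 → ℝ) → ℝ)
    (hT : ∀ p i j x, T p i j x = (L p i j x - L p j i x) / 2)
    -- the surface fields H_{iα} and F_{ij}
    (Hf : Fin 3 → Fin 2 → (Fin 2 → ℝ) → ℝ)
    (hHf1 : ∀ (μ α : Fin 2) θ, Hf μ.castSucc α θ = dot3 (A μ θ) (a α θ))
    (hHf2 : ∀ (α : Fin 2) θ, Hf 2 α θ = dot3 (N θ) (a α θ))
    (F : Fin 3 → Fin 3 → (Fin 2 → ℝ) → ℝ)
    (hF1 : ∀ (μ β : Fin 2) θ, F μ.castSucc β.castSucc θ = dot3 (A μ θ) (D β θ))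
    (hF2 : ∀ (β : Fin 2) θ, F 2 β.castSucc θ = dot3 (N θ) (D β θ))
    (hF3 : ∀ (μ : Fin 2) θ, F μ.castSucc 2 θ = dot3 (A μ θ) (d θ))
    (hF4 : ∀ θ, F 2 2 θ = dot3 (N θ) (d θ)) :
    (∀ θ ∈ ω, ∀ p i j : Fin 3, T p i j (emb θ 0) = 0) ↔
      (∀ θ ∈ ω,
        -- (1) vanishing of the dislocation densities 𝕋_{iαβ}
        (∀ (i : Fin 3) (α β : Fin 2), pd2 β (Hf i α) θ - pd2 α (Hf i β) θ = 0) ∧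
        -- (2) vanishing of the measures 𝕋_{μα3}
        (∀ (μ α : Fin 2), pd2 α (F μ.castSucc 2) θ - F μ.castSucc α.castSucc θ
          + (∑ ν, Bup ν μ θ * Hf ν.castSucc α θ) = 0) ∧
        -- (3) vanishing of the measures 𝕋_{3α3}
        (∀ α : Fin 2, pd2 α (F 2 2) θ - F 2 α.castSucc θ = 0)) := by
  
  have h0I : (0:ℝ) ∈ Ioo (-ht) ht := ⟨by linarith, hht⟩
  set Ωs : Set (Fin 3 → ℝ) := {x | θof x ∈ ω ∧ x 2 ∈ Ioo (-ht) ht} with hΩs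
  have hΩo : IsOpen Ωs := by
    have h1 : Continuous θof := by rw [← θL_eq]; exact θL.continuous
    have h2 : Continuous (fun x : Fin 3 → ℝ => x 2) := continuous_apply 2
    have : Ωs = θof ⁻¹' ω ∩ (fun x : Fin 3 → ℝ => x 2) ⁻¹' Ioo (-ht) ht := rfl
    rw [this]
    exact (hωo.preimage h1).inter (isOpen_Ioo.preimage h2)
  have hzmem : ∀ θ' ∈ ω, ∀ ζ ∈ Ioo (-ht) ht, emb θ' ζ ∈ Ωs := by
    intro θ' hθ' ζ hζ
    refine ⟨?_, ?_⟩
    · rw [θof_emb]; exact hθ'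
    · rw [emb_two]; exact hζ
  have hAfun : ∀ α, A α = fun θ' => fderiv ℝ R θ' (Pi.single α 1) := by
    intro α; funext θ'; rw [hA α θ']; rfl
  have hfds : ContDiffOn ℝ (⊤:ℕ∞) (fderiv ℝ R) ω :=
    hRs.fderiv_of_isOpen hωo (by exact_mod_cast le_top)
  have hAs : ∀ α, ContDiffOn ℝ (⊤:ℕ∞) (A α) ω := by
    intro α; rw [hAfun α]
    exact hfds.clm_apply contDiffOn_const
  have hAd : ∀ α, ∀ θ' ∈ ω, DifferentiableAt ℝ (A α) θ' := by
    intro α θ' hθ'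
    exact ((hAs α).differentiableOn (by simp)).differentiableAt
      (hωo.mem_nhds hθ')
  have hRd : ∀ θ' ∈ ω, DifferentiableAt ℝ R θ' := by
    intro θ' hθ'
    exact (hRs.differentiableOn (by simp)).differentiableAt
      (hωo.mem_nhds hθ')
  have hAsym : ∀ θ' ∈ ω, ∀ α β : Fin 2, vpd2 β (A α) θ' = vpd2 α (A β) θ' := by
    intro θ' hθ' α β
    have hfdd : DifferentiableAt ℝ (fderiv ℝ R) θ' :=
      (hfds.differentiableOn (by simp)).differentiableAt
        (hωo.mem_nhds hθ')
    have key : ∀ γ δ : Fin 2, vpd2 δ (A γ) θ'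
        = fderiv ℝ (fderiv ℝ R) θ' (Pi.single δ 1) (Pi.single γ 1) := by
      intro γ δ
      rw [vpd2, hAfun γ]
      rw [fderiv_clm_apply hfdd (differentiableAt_const _)]
      simp
    rw [key α β, key β α]
    exact (hRs.contDiffAt (hωo.mem_nhds hθ')).isSymmSndFDerivAt
      (by rw [minSmoothness_of_isRCLikeNormedField,
            show (2 : WithTop ℕ∞) = ((2:ℕ∞) : WithTop ℕ∞) from rfl]
          exact WithTop.coe_le_coe.mpr le_top) _ _
  have hindep : ∀ θ' ∈ ω, ∀ c1 c2 : ℝ, c1 • A 0 θ' + c2 • A 1 θ' = 0 → c1 = 0 ∧ c2 = 0 := by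
    intro θ' hθ' c1 c2 hc
    have hv : (![c1, c2] : Fin 2 → ℝ)
        = c1 • (Pi.single 0 1 : Fin 2 → ℝ) + c2 • (Pi.single 1 1 : Fin 2 → ℝ) := by
      funext i; fin_cases i <;> simp [Pi.single_apply]
    have h1 : fderiv ℝ R θ' ![c1, c2] = c1 • A 0 θ' + c2 • A 1 θ' := by
      rw [hv, map_add, map_smul, map_smul, hAfun 0, hAfun 1]
    have h2 : fderiv ℝ R θ' ![c1, c2] = fderiv ℝ R θ' 0 := by
      rw [h1, hc, map_zero]
    have h0 := hRimm θ' hθ' h2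
    exact ⟨congrFun h0 0, congrFun h0 1⟩
  have hnn : ∀ θ' ∈ ω,
      dot3 (cross3 (A 0 θ') (A 1 θ')) (cross3 (A 0 θ') (A 1 θ')) ≠ 0 := by
    intro θ' hθ' h
    exact cross3_ne_zero (hindep θ' hθ') (eq_zero_of_dot3_self _ h)
  have hnormne : ∀ θ' ∈ ω, norm3 (cross3 (A 0 θ') (A 1 θ')) ≠ 0 := by
    intro θ' hθ'
    rw [norm3]
    exact Real.sqrt_ne_zero'.mpr
      (lt_of_le_of_ne (dot3_self_nonneg _) (Ne.symm (hnn θ' hθ')))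
  have hNN : ∀ θ' ∈ ω, dot3 (N θ') (N θ') = 1 := by
    intro θ' hθ'
    rw [hN θ', dot3_smul_left, dot3_smul_right]
    have hms : norm3 (cross3 (A 0 θ') (A 1 θ')) * norm3 (cross3 (A 0 θ') (A 1 θ'))
        = dot3 (cross3 (A 0 θ') (A 1 θ')) (cross3 (A 0 θ') (A 1 θ')) := by
      rw [norm3]; exact Real.mul_self_sqrt (dot3_self_nonneg _)
    field_simp
    rw [sq, hms]
    exact div_self (hnn θ' hθ')
  have hNA : ∀ θ' ∈ ω, ∀ μ, dot3 (N θ') (A μ θ') = 0 := by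
    intro θ' hθ' μ
    rw [hN θ', dot3_smul_left]
    have h0 : dot3 (cross3 (A 0 θ') (A 1 θ')) (A μ θ') = 0 := by
      fin_cases μ
      · simpa using dot3_cross_left (A 0 θ') (A 1 θ')
      · simpa using dot3_cross_right (A 0 θ') (A 1 θ')
    rw [h0, mul_zero]
  have hNd : ∀ θ' ∈ ω, DifferentiableAt ℝ N θ' := by
    intro θ' hθ'
    have hNfun : N = fun t => (norm3 (cross3 (A 0 t) (A 1 t)))⁻¹ • cross3 (A 0 t) (A 1 t) :=
      funext hN
    rw [hNfun]
    have hcd : DifferentiableAt ℝ (fun t => cross3 (A 0 t) (A 1 t)) θ' :=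
      differentiableAt_cross3 (hAd 0 θ' hθ') (hAd 1 θ' hθ')
    have hdd : DifferentiableAt ℝ
        (fun t => dot3 (cross3 (A 0 t) (A 1 t)) (cross3 (A 0 t) (A 1 t))) θ' :=
      differentiableAt_dot3 hcd hcd
    have hsd : DifferentiableAt ℝ (fun t => norm3 (cross3 (A 0 t) (A 1 t))) θ' := by
      have hsq : DifferentiableAt ℝ Real.sqrt
          (dot3 (cross3 (A 0 θ') (A 1 θ')) (cross3 (A 0 θ') (A 1 θ'))) :=
        (Real.hasStrictDerivAt_sqrt (hnn θ' hθ')).hasDerivAt.differentiableAt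
      exact hsq.comp θ' hdd
    exact (hsd.inv (hnormne θ' hθ')).smul hcd
  have hdNN : ∀ θ' ∈ ω, ∀ α, dot3 (vpd2 α N θ') (N θ') = 0 := by
    intro θ' hθ' α
    have hev : (fun t => dot3 (N t) (N t)) =ᶠ[nhds θ'] (fun _ => (1:ℝ)) :=
      Filter.eventuallyEq_of_mem (hωo.mem_nhds hθ') (fun t ht' => hNN t ht')
    have h0 : fderiv ℝ (fun t => dot3 (N t) (N t)) θ' = 0 := by
      rw [hev.fderiv_eq]; exact fderiv_const_apply 1
    have h1 := fderiv_dot3_apply (hNd θ' hθ') (hNd θ' hθ') (Pi.single α 1)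
    rw [h0] at h1
    simp only [ContinuousLinearMap.zero_apply] at h1
    have h2 : dot3 (N θ') (fderiv ℝ N θ' (Pi.single α 1))
        = dot3 (fderiv ℝ N θ' (Pi.single α 1)) (N θ') := dot3_comm _ _
    rw [h2] at h1
    have : (0:ℝ) = 2 * dot3 (fderiv ℝ N θ' (Pi.single α 1)) (N θ') := by linarith
    rw [vpd2]
    linarith
  have hBfval : ∀ θ' ∈ ω, ∀ α β, Bf α β θ' = dot3 (N θ') (vpd2 β (A α) θ') := by
    intro θ' hθ' α β
    have hev : (fun t => dot3 (N t) (A α t)) =ᶠ[nhds θ'] (fun _ => (0:ℝ)) :=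
      Filter.eventuallyEq_of_mem (hωo.mem_nhds hθ') (fun t ht' => hNA t ht' α)
    have h0 : fderiv ℝ (fun t => dot3 (N t) (A α t)) θ' = 0 := by
      rw [hev.fderiv_eq]; exact fderiv_const_apply 0
    have h1 := fderiv_dot3_apply (hNd θ' hθ') (hAd α θ' hθ') (Pi.single β 1)
    rw [h0] at h1
    simp only [ContinuousLinearMap.zero_apply] at h1
    rw [hBf α β θ']
    have h2 : dot3 (fderiv ℝ N θ' (Pi.single β 1)) (A α θ')
        + dot3 (N θ') (fderiv ℝ (A α) θ' (Pi.single β 1)) = 0 := h1.symm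
    rw [vpd2, vpd2]
    linarith
  have hBfsym : ∀ θ' ∈ ω, ∀ α β, Bf α β θ' = Bf β α θ' := by
    intro θ' hθ' α β
    rw [hBfval θ' hθ' α β, hBfval θ' hθ' β α, hAsym θ' hθ' α β]
  have hAmatdet : ∀ θ' ∈ ω,
      (Matrix.of fun μ ν : Fin 2 => dot3 (A μ θ') (A ν θ')).det ≠ 0 := by
    intro θ' hθ'
    rw [Matrix.det_fin_two]
    simp only [Matrix.of_apply]
    rw [show dot3 (A 1 θ') (A 0 θ') = dot3 (A 0 θ') (A 1 θ') from dot3_comm _ _,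
      lagrange]
    exact hnn θ' hθ'
  have hexpand : ∀ θ' ∈ ω, ∀ w : Fin 3 → ℝ, dot3 w (N θ') = 0 →
      w = ∑ ν, (∑ ρ, (Matrix.of fun μ' ν' : Fin 2 =>
        dot3 (A μ' θ') (A ν' θ'))⁻¹ ν ρ * dot3 w (A ρ θ')) • A ν θ' := by
    intro θ' hθ' w hw
    set n : Fin 3 → ℝ := cross3 (A 0 θ') (A 1 θ') with hn
    set Am : Matrix (Fin 2) (Fin 2) ℝ :=
      Matrix.of fun μ' ν' : Fin 2 => dot3 (A μ' θ') (A ν' θ') with hAm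
    set c : Fin 2 → ℝ := fun ν => ∑ ρ, Am⁻¹ ν ρ * dot3 w (A ρ θ') with hc
    set u : Fin 3 → ℝ := w - ∑ ν, c ν • A ν θ' with hu
    have hAn : ∀ ν : Fin 2, dot3 n (A ν θ') = 0 := by
      intro ν
      fin_cases ν
      · simpa using dot3_cross_left (A 0 θ') (A 1 θ')
      · simpa using dot3_cross_right (A 0 θ') (A 1 θ')
    have hwn : dot3 n w = 0 := by
      have hNn : n = norm3 n • N θ' := by
        rw [hN θ', smul_smul, mul_inv_cancel₀ (hnormne θ' hθ'), one_smul]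
      rw [hNn, dot3_smul_left, dot3_comm, hw, mul_zero]
    have hcA : ∀ ρ : Fin 2, dot3 (∑ ν, c ν • A ν θ') (A ρ θ') = dot3 w (A ρ θ') := by
      intro ρ
      rw [dot3_sum_left]
      have h1 : ∀ ν : Fin 2, dot3 (c ν • A ν θ') (A ρ θ') = Am ρ ν * c ν := by
        intro ν
        rw [dot3_smul_left]
        have : dot3 (A ν θ') (A ρ θ') = Am ρ ν := by
          rw [hAm]; exact dot3_comm _ _
        rw [this, mul_comm]
      rw [Finset.sum_congr rfl (fun ν _ => h1 ν)]
      have hmv : ∑ ν, Am ρ ν * c ν = Am.mulVec c ρ := by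
        simp [Matrix.mulVec, dotProduct]
      rw [hmv]
      have hcv : c = Am⁻¹.mulVec (fun ρ' => dot3 w (A ρ' θ')) := by
        funext ν
        simp [hc, Matrix.mulVec, dotProduct]
      rw [hcv, Matrix.mulVec_mulVec, Matrix.mul_nonsing_inv Am
        (Ne.isUnit (hAmatdet θ' hθ')), Matrix.one_mulVec]
    have hun : dot3 n u = 0 := by
      rw [hu, dot3_sub_right, hwn]
      rw [dot3_sum_right]
      have : ∀ ν : Fin 2, dot3 n (c ν • A ν θ') = 0 := by
        intro ν; rw [dot3_smul_right, hAn ν, mul_zero]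
      rw [Finset.sum_congr rfl (fun ν _ => this ν)]
      simp
    have huA : ∀ ρ : Fin 2, dot3 u (A ρ θ') = 0 := by
      intro ρ
      rw [hu, dot3_sub_left, hcA ρ, sub_self]
    have hu0 : u = 0 := by
      apply vec_eq_zero_of_mulVec (M := Matrix.of ![A 0 θ', A 1 θ', n])
      · rw [hn, det_rows]; exact hnn θ' hθ'
      · funext i
        have hrow : ∀ i, (Matrix.of ![A 0 θ', A 1 θ', n]).mulVec u i
            = dot3 ((Matrix.of ![A 0 θ', A 1 θ', n]) i) u := by
          intro i; simp [Matrix.mulVec, dotProduct, dot3]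
        rw [hrow]
        fin_cases i
        · have := huA 0; rw [dot3_comm] at this; exact this
        · have := huA 1; rw [dot3_comm] at this; exact this
        · exact hun
    rw [hu] at hu0
    exact sub_eq_zero.mp hu0
  have hWein : ∀ θ' ∈ ω, ∀ μ, vpd2 μ N θ' = ∑ ν, (-(Bup ν μ θ')) • A ν θ' := by
    intro θ' hθ' μ
    have h := hexpand θ' hθ' (vpd2 μ N θ') (hdNN θ' hθ' μ)
    rw [h]
    apply Finset.sum_congr rfl
    intro ν _
    congr 1
    rw [hBup ν μ θ']
    have hval : ∀ ρ : Fin 2, dot3 (vpd2 μ N θ') (A ρ θ') = -Bf μ ρ θ' := by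
      intro ρ
      rw [hBfsym θ' hθ' μ ρ, hBf ρ μ θ', neg_neg]
    calc ∑ ρ, (Matrix.of fun μ' ν' : Fin 2 => dot3 (A μ' θ') (A ν' θ'))⁻¹ ν ρ
          * dot3 (vpd2 μ N θ') (A ρ θ')
        = ∑ ρ, -((Matrix.of fun μ' ν' : Fin 2 => dot3 (A μ' θ') (A ν' θ'))⁻¹ ν ρ
          * Bf μ ρ θ') := by
          apply Finset.sum_congr rfl; intro ρ _; rw [hval ρ, mul_neg]
      _ = -(∑ γ, (Matrix.of fun μ' ν' : Fin 2 => dot3 (A μ' θ') (A ν' θ'))⁻¹ ν γ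
          * Bf μ γ θ') := by rw [Finset.sum_neg_distrib]
  have hXder : ∀ x ∈ Ωs, HasFDerivAt X
      ((fderiv ℝ R (θof x)).comp θL + ((x 2) • (fderiv ℝ N (θof x)).comp θL
        + (ContinuousLinearMap.proj 2 : (Fin 3 → ℝ) →L[ℝ] ℝ).smulRight (N (θof x)))) x := by
    intro x hx
    obtain ⟨hx1, hx2⟩ := hx
    have hXfun : X = fun x' => R (θof x') + x' 2 • N (θof x') := funext hX
    rw [hXfun]
    have hRcomp : HasFDerivAt (fun x' => R (θof x')) ((fderiv ℝ R (θof x)).comp θL) x := by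
      have h1 : HasFDerivAt R (fderiv ℝ R (θof x)) (θL x) := by
        rw [θL_apply]; exact (hRd (θof x) hx1).hasFDerivAt
      have h2 := h1.comp x θL.hasFDerivAt
      simpa [θL_apply] using h2
    have hNcomp : HasFDerivAt (fun x' => N (θof x')) ((fderiv ℝ N (θof x)).comp θL) x := by
      have h1 : HasFDerivAt N (fderiv ℝ N (θof x)) (θL x) := by
        rw [θL_apply]; exact (hNd (θof x) hx1).hasFDerivAt
      have h2 := h1.comp x θL.hasFDerivAt
      simpa [θL_apply] using h2
    have hproj : HasFDerivAt (fun x' : Fin 3 → ℝ => x' 2)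
        (ContinuousLinearMap.proj 2 : (Fin 3 → ℝ) →L[ℝ] ℝ) x :=
      (ContinuousLinearMap.proj 2 : (Fin 3 → ℝ) →L[ℝ] ℝ).hasFDerivAt
    exact hRcomp.add (hproj.smul hNcomp)
  have hGval1 : ∀ x ∈ Ωs, ∀ α : Fin 2,
      vpd3 (Fin.castSucc α) X x = A α (θof x) + x 2 • vpd2 α N (θof x) := by
    intro x hx α
    rw [vpd3, (hXder x hx).fderiv]
    have h2 : (Pi.single (Fin.castSucc α) 1 : Fin 3 → ℝ) 2 = 0 := by
      fin_cases α <;> simp [Pi.single_apply] <;> decide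
    simp only [ContinuousLinearMap.add_apply, ContinuousLinearMap.coe_comp',
      Function.comp_apply, ContinuousLinearMap.coe_smul', Pi.smul_apply,
      ContinuousLinearMap.smulRight_apply, ContinuousLinearMap.proj_apply,
      θL_single_castSucc, h2, zero_smul, add_zero]
    rw [hAfun α]
    rfl
  have hGval2 : ∀ x ∈ Ωs, vpd3 2 X x = N (θof x) := by
    intro x hx
    rw [vpd3, (hXder x hx).fderiv]
    have h2 : (Pi.single (2 : Fin 3) 1 : Fin 3 → ℝ) 2 = 1 := Pi.single_eq_same _ _
    simp only [ContinuousLinearMap.add_apply, ContinuousLinearMap.coe_comp',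
      Function.comp_apply, ContinuousLinearMap.coe_smul', Pi.smul_apply,
      ContinuousLinearMap.smulRight_apply, ContinuousLinearMap.proj_apply,
      θL_single_two, h2, one_smul, map_zero, smul_zero, zero_add]
  have hHhval : ∀ x ∈ Ωs, ∀ l i, Hh l i x = dot3 (vpd3 l X x) (gv i x) := by
    intro x hx l i
    have hGmdet : (Matrix.of fun p q => dot3 (vpd3 p X x) (vpd3 q X x)).det ≠ 0 := by
      apply gram_det_ne_zero
      intro c hc
      have hcx : c = ∑ k, c k • (Pi.single k 1 : Fin 3 → ℝ) := by
        funext j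
        simp [Fin.sum_univ_three, Pi.single_apply]
      have hker : fderiv ℝ X x c = 0 := by
        rw [hcx, map_sum]
        have he : ∀ k ∈ (Finset.univ : Finset (Fin 3)),
            fderiv ℝ X x (c k • (Pi.single k 1 : Fin 3 → ℝ)) = c k • vpd3 k X x :=
          fun k _ => by rw [map_smul]; rfl
        rw [Finset.sum_congr rfl he]
        exact hc
      have hinj := (hXdiff x hx.1 hx.2).injective
      have : c = 0 := hinj (by rw [hker, map_zero])
      exact this
    rw [hgv i x, dot3_sum_right]
    set Gm : Matrix (Fin 3) (Fin 3) ℝ :=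
      Matrix.of fun p q => dot3 (vpd3 p X x) (vpd3 q X x) with hGm
    have hterm : ∀ p, dot3 (vpd3 l X x) (Hh p i x • ∑ k, Gm⁻¹ p k • vpd3 k X x)
        = Hh p i x * (Gm⁻¹ * Gm) p l := by
      intro p
      rw [dot3_smul_right, dot3_sum_right]
      congr 1
      rw [Matrix.mul_apply]
      apply Finset.sum_congr rfl
      intro k _
      rw [dot3_smul_right]
      congr 1
      rw [hGm]
      exact dot3_comm _ _
    rw [Finset.sum_congr rfl (fun p _ => hterm p)]
    rw [Matrix.nonsing_inv_mul Gm (Ne.isUnit hGmdet)]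
    simp [Matrix.one_apply]
  have hHh1 : ∀ x ∈ Ωs, ∀ μ γ : Fin 2, Hh (Fin.castSucc μ) (Fin.castSucc γ) x
      = dot3 (A μ (θof x)) (a γ (θof x))
        + x 2 * (dot3 (vpd2 μ N (θof x)) (a γ (θof x)) + dot3 (A μ (θof x)) (D γ (θof x)))
        + (x 2) ^ 2 * dot3 (vpd2 μ N (θof x)) (D γ (θof x)) := by
    intro x hx μ γ
    rw [hHhval x hx (Fin.castSucc μ) (Fin.castSucc γ), hGval1 x hx μ,
      (hstruct x hx.1 hx.2).1 γ]
    simp only [dot3, Fin.sum_univ_three, Pi.add_apply, Pi.smul_apply, smul_eq_mul]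
    ring
  have hHh2 : ∀ x ∈ Ωs, ∀ γ : Fin 2, Hh 2 (Fin.castSucc γ) x
      = dot3 (N (θof x)) (a γ (θof x)) + x 2 * dot3 (N (θof x)) (D γ (θof x)) := by
    intro x hx γ
    rw [hHhval x hx 2 (Fin.castSucc γ), hGval2 x hx, (hstruct x hx.1 hx.2).1 γ]
    simp only [dot3, Fin.sum_univ_three, Pi.add_apply, Pi.smul_apply, smul_eq_mul]
    ring
  have hHh3 : ∀ x ∈ Ωs, ∀ μ : Fin 2, Hh (Fin.castSucc μ) 2 x
      = dot3 (A μ (θof x)) (d (θof x)) + x 2 * dot3 (vpd2 μ N (θof x)) (d (θof x)) := by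
    intro x hx μ
    rw [hHhval x hx (Fin.castSucc μ) 2, hGval1 x hx μ, (hstruct x hx.1 hx.2).2]
    simp only [dot3, Fin.sum_univ_three, Pi.add_apply, Pi.smul_apply, smul_eq_mul]
    ring
  have hHh4 : ∀ x ∈ Ωs, Hh 2 2 x = dot3 (N (θof x)) (d (θof x)) := by
    intro x hx
    rw [hHhval x hx 2 2, hGval2 x hx, (hstruct x hx.1 hx.2).2]
  have hdiffHh : ∀ θ' ∈ ω, ∀ l i, DifferentiableAt ℝ (Hh l i) (emb θ' 0) := by
    intro θ' hθ' l i
    exact ((hHs l i).differentiableOn (by simp)).differentiableAt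
      (hΩo.mem_nhds (hzmem θ' hθ' 0 h0I))
  have hsurf1 : ∀ θ' ∈ ω, ∀ (i : Fin 3) (α β : Fin 2),
      pd2 β (Hf i α) θ' = pd3 (Fin.castSucc β) (Hh i (Fin.castSucc α)) (emb θ' 0) := by
    intro θ' hθ' i α β
    have hev : Hf i α =ᶠ[nhds θ'] (fun t => Hh i (Fin.castSucc α) (emb t 0)) := by
      apply Filter.eventuallyEq_of_mem (hωo.mem_nhds hθ')
      intro t ht'
      have htm : emb t 0 ∈ Ωs := hzmem t ht' 0 h0I
      induction i using Fin.lastCases with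
      | last =>
        show Hf 2 α t = Hh 2 (Fin.castSucc α) (emb t 0)
        rw [hHf2 α t, hHh2 (emb t 0) htm α, θof_emb, emb_two]
        ring
      | cast μ =>
        show Hf (Fin.castSucc μ) α t = Hh (Fin.castSucc μ) (Fin.castSucc α) (emb t 0)
        rw [hHf1 μ α t, hHh1 (emb t 0) htm μ α, θof_emb, emb_two]
        ring
    have hps := pd2_surface (Hh i (Fin.castSucc α)) θ'
      (hdiffHh θ' hθ' i (Fin.castSucc α)) β
    rw [← hps, pd2, pd2, hev.fderiv_eq]
  have hsurf2 : ∀ θ' ∈ ω, ∀ (i : Fin 3) (α : Fin 2),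
      pd2 α (F i 2) θ' = pd3 (Fin.castSucc α) (Hh i 2) (emb θ' 0) := by
    intro θ' hθ' i α
    have hev : F i 2 =ᶠ[nhds θ'] (fun t => Hh i 2 (emb t 0)) := by
      apply Filter.eventuallyEq_of_mem (hωo.mem_nhds hθ')
      intro t ht'
      have htm : emb t 0 ∈ Ωs := hzmem t ht' 0 h0I
      induction i using Fin.lastCases with
      | last =>
        show F 2 2 t = Hh 2 2 (emb t 0)
        rw [hF4 t, hHh4 (emb t 0) htm, θof_emb]
      | cast μ =>
        show F (Fin.castSucc μ) 2 t = Hh (Fin.castSucc μ) 2 (emb t 0)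
        rw [hF3 μ t, hHh3 (emb t 0) htm μ, θof_emb, emb_two]
        ring
    have hps := pd2_surface (Hh i 2) θ' (hdiffHh θ' hθ' i 2) α
    rw [← hps, pd2, pd2, hev.fderiv_eq]
  have hzeta1 : ∀ θ' ∈ ω, ∀ μ α : Fin 2,
      pd3 2 (Hh (Fin.castSucc μ) (Fin.castSucc α)) (emb θ' 0)
      = -(∑ ν, Bup ν μ θ' * Hf (Fin.castSucc ν) α θ')
        + F (Fin.castSucc μ) (Fin.castSucc α) θ' := by
    intro θ' hθ' μ α
    rw [pd3_zeta _ θ' (hdiffHh θ' hθ' (Fin.castSucc μ) (Fin.castSucc α))]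
    have hev : (fun ζ => Hh (Fin.castSucc μ) (Fin.castSucc α) (emb θ' ζ)) =ᶠ[nhds 0]
        (fun ζ => dot3 (A μ θ') (a α θ')
          + ζ * (dot3 (vpd2 μ N θ') (a α θ') + dot3 (A μ θ') (D α θ'))
          + ζ ^ 2 * dot3 (vpd2 μ N θ') (D α θ')) := by
      apply Filter.eventuallyEq_of_mem (Ioo_mem_nhds (neg_lt_zero.mpr hht) hht)
      intro ζ hζ
      show Hh (Fin.castSucc μ) (Fin.castSucc α) (emb θ' ζ)
        = dot3 (A μ θ') (a α θ')
          + ζ * (dot3 (vpd2 μ N θ') (a α θ') + dot3 (A μ θ') (D α θ'))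
          + ζ ^ 2 * dot3 (vpd2 μ N θ') (D α θ')
      rw [hHh1 (emb θ' ζ) (hzmem θ' hθ' ζ hζ) μ α, θof_emb, emb_two]
    rw [hev.deriv_eq, deriv_quadratic]
    rw [hWein θ' hθ' μ, dot3_sum_left]
    have h1 : ∀ ν : Fin 2, dot3 ((-(Bup ν μ θ')) • A ν θ') (a α θ')
        = -(Bup ν μ θ' * Hf (Fin.castSucc ν) α θ') := by
      intro ν
      rw [dot3_smul_left, hHf1 ν α θ']
      ring
    rw [Finset.sum_congr rfl (fun ν _ => h1 ν), Finset.sum_neg_distrib, hF1 μ α θ']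
  have hzeta2 : ∀ θ' ∈ ω, ∀ α : Fin 2,
      pd3 2 (Hh 2 (Fin.castSucc α)) (emb θ' 0) = F 2 (Fin.castSucc α) θ' := by
    intro θ' hθ' α
    rw [pd3_zeta _ θ' (hdiffHh θ' hθ' 2 (Fin.castSucc α))]
    have hev : (fun ζ => Hh 2 (Fin.castSucc α) (emb θ' ζ)) =ᶠ[nhds 0]
        (fun ζ => dot3 (N θ') (a α θ') + ζ * dot3 (N θ') (D α θ')) := by
      apply Filter.eventuallyEq_of_mem (Ioo_mem_nhds (neg_lt_zero.mpr hht) hht)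
      intro ζ hζ
      show Hh 2 (Fin.castSucc α) (emb θ' ζ)
        = dot3 (N θ') (a α θ') + ζ * dot3 (N θ') (D α θ')
      rw [hHh2 (emb θ' ζ) (hzmem θ' hθ' ζ hζ) α, θof_emb, emb_two]
    rw [hev.deriv_eq, deriv_linear, hF2 α θ']
  have hTS : ∀ θ' ∈ ω, ((∀ p i j, T p i j (emb θ' 0) = 0) ↔
      (∀ l i j, pd3 j (Hh l i) (emb θ' 0) - pd3 i (Hh l j) (emb θ' 0) = 0)) := by
    intro θ' hθ'
    have hz : emb θ' 0 ∈ Ωs := hzmem θ' hθ' 0 h0I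
    have hdet : (Matrix.of fun p r => Hh p r (emb θ' 0)).det ≠ 0 := hHinv _ hz.1 hz.2
    constructor
    · intro h l i j
      have hmv : (Matrix.of fun p r => Hh p r (emb θ' 0))⁻¹.mulVec
          (fun l' => pd3 j (Hh l' i) (emb θ' 0) - pd3 i (Hh l' j) (emb θ' 0)) = 0 := by
        funext p
        have h0 := h p i j
        rw [hT p i j, div_eq_zero_iff] at h0
        have h1 : L p i j (emb θ' 0) - L p j i (emb θ' 0) = 0 := by
          rcases h0 with h0 | h0
          · exact h0
          · norm_num at h0
        rw [hL p i j, hL p j i] at h1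
        simp only [Matrix.mulVec, dotProduct, mul_sub,
          Finset.sum_sub_distrib, Pi.zero_apply]
        linarith [h1]
      have hzero := vec_eq_zero_of_inv_mulVec hdet hmv
      exact congrFun hzero l
    · intro hS p i j
      rw [hT p i j, hL p i j, hL p j i]
      have he : ∀ l ∈ (Finset.univ : Finset (Fin 3)),
          (Matrix.of fun p' r => Hh p' r (emb θ' 0))⁻¹ p l * pd3 j (Hh l i) (emb θ' 0)
          = (Matrix.of fun p' r => Hh p' r (emb θ' 0))⁻¹ p l * pd3 i (Hh l j) (emb θ' 0) := by
        intro l _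
        have hs := hS l i j
        have heq : pd3 j (Hh l i) (emb θ' 0) = pd3 i (Hh l j) (emb θ' 0) := by
          linarith [hs]
        rw [heq]
      rw [Finset.sum_congr rfl he, sub_self, zero_div]
  have hlast2 : (Fin.last 2 : Fin 3) = 2 := rfl
  constructor
  · intro hT0 θ' hθ'
    have hS := (hTS θ' hθ').mp (hT0 θ' hθ')
    refine ⟨?_, ?_, ?_⟩
    · intro i α β
      rw [hsurf1 θ' hθ' i α β, hsurf1 θ' hθ' i β α]
      exact hS i (Fin.castSucc α) (Fin.castSucc β)
    · intro μ α
      have h := hS (Fin.castSucc μ) 2 (Fin.castSucc α)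
      rw [hzeta1 θ' hθ' μ α] at h
      rw [hsurf2 θ' hθ' (Fin.castSucc μ) α]
      linarith [h]
    · intro α
      have h := hS 2 2 (Fin.castSucc α)
      rw [hzeta2 θ' hθ' α] at h
      rw [hsurf2 θ' hθ' 2 α]
      linarith [h]
  · intro hC θ' hθ'
    apply (hTS θ' hθ').mpr
    obtain ⟨h1, h2, h3⟩ := hC θ' hθ'
    intro l i j
    induction i using Fin.lastCases with
    | last =>
      induction j using Fin.lastCases with
      | last => simp
      | cast β =>
        induction l using Fin.lastCases with
        | last =>
          have hh := h3 β
          rw [hsurf2 θ' hθ' 2 β] at hh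
          rw [hlast2, hzeta2 θ' hθ' β]
          linarith [hh]
        | cast μ =>
          have hh := h2 μ β
          rw [hsurf2 θ' hθ' (Fin.castSucc μ) β] at hh
          rw [hlast2, hzeta1 θ' hθ' μ β]
          linarith [hh]
    | cast α =>
      induction j using Fin.lastCases with
      | last =>
        induction l using Fin.lastCases with
        | last =>
          have hh := h3 α
          rw [hsurf2 θ' hθ' 2 α] at hh
          rw [hlast2, hzeta2 θ' hθ' α]
          linarith [hh]
        | cast μ =>
          have hh := h2 μ α
          rw [hsurf2 θ' hθ' (Fin.castSucc μ) α] at hh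
          rw [hlast2, hzeta1 θ' hθ' μ α]
          linarith [hh]
      | cast β =>
        have hh := h1 l α β
        rw [hsurf1 θ' hθ' l α β, hsurf1 θ' hθ' l β α] at hh
        linarith [hh]
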